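/- Let G-spec R denote the set of G-prime ideals of R, equipped with the topology whose closed sets are exactly the sets V_G(I) = {Q ∈ G-spec R : Q ⊇ I} for ideals I of R. Then the map P ↦ (P : G) is a topological quotient map from spec R (with the Zariski topology) onto G-spec R, and the map M ↦ (M : G) is a topological quotient map from max R (with the relative Zariski topology) onto its image {(M : G) : M ∈ max R} ⊆ G-spec R (with the relative topology). -/

import Mathlib

/-- An ideal (i.e. left ideal) of a not-necessarily-commutative ring is two-sided. -/
def IsTwoSidedI {R : Type*} [Ring R] (I : Ideal R) : Prop :=
  ∀ a ∈ I, ∀ r : R, a * r ∈ I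

/-- A (two-sided) ideal `P` is prime: it is proper and `IJ ⊆ P` forces `I ⊆ P` or `J ⊆ P`
for all two-sided ideals `I`, `J`. -/
def IsPrimeTS {R : Type*} [Ring R] (P : Ideal R) : Prop :=
  IsTwoSidedI P ∧ P ≠ ⊤ ∧
    ∀ I J : Ideal R, IsTwoSidedI I → IsTwoSidedI J →
      (∀ a ∈ I, ∀ b ∈ J, a * b ∈ P) → I ≤ P ∨ J ≤ P

/-- `J` is `X`-semiprime: an intersection of a collection of `X`-prime ideals. -/
def IsXSemiprime {R : Type*} [Ring R] (𝒳 : Set (Ideal R)) (J : Ideal R) : Prop :=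
  ∃ T ⊆ 𝒳, J = sInf T


/-- The translate of an ideal under the ring automorphism given by a group element
(expressed as a preimage, which for a group action gives the same family of translates). -/
def gTrans {R : Type*} [Ring R] {G : Type*} [Group G] [MulSemiringAction G R]
    (g : G) (I : Ideal R) : Ideal R :=
  Ideal.comap (MulSemiringAction.toRingHom G R g) I

/-- A `G`-ideal: a two-sided ideal stable under the action of `G`. -/
def IsGIdeal {R : Type*} [Ring R] (G : Type*) [Group G] [MulSemiringAction G R]
    (I : Ideal R) : Prop :=
  IsTwoSidedI I ∧ ∀ g : G, gTrans g I = I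

/-- A `G`-prime ideal: a proper `G`-ideal `Q` with `IJ ⊆ Q → I ⊆ Q ∨ J ⊆ Q`
for all `G`-ideals `I`, `J`. -/
def IsGPrime {R : Type*} [Ring R] (G : Type*) [Group G] [MulSemiringAction G R]
    (Q : Ideal R) : Prop :=
  IsGIdeal G Q ∧ Q ≠ ⊤ ∧
    ∀ I J : Ideal R, IsGIdeal G I → IsGIdeal G J →
      (∀ a ∈ I, ∀ b ∈ J, a * b ∈ Q) → I ≤ Q ∨ J ≤ Q

/-- `(I : G) = ⋂_{g ∈ G} g(I)`, the largest `G`-ideal contained in `I`. -/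
noncomputable def resGIdeal {R : Type*} [Ring R] (G : Type*) [Group G] [MulSemiringAction G R]
    (I : Ideal R) : Ideal R :=
  ⨅ g : G, gTrans g I

/-- A maximal (two-sided) ideal of a not-necessarily-commutative ring. -/
def IsMaxTS {R : Type*} [Ring R] (M : Ideal R) : Prop :=
  IsTwoSidedI M ∧ M ≠ ⊤ ∧ ∀ J : Ideal R, IsTwoSidedI J → M < J → J = ⊤

section Aux
variable {R : Type*} [Ring R] {G : Type*} [Group G] [MulSemiringAction G R]

lemma mem_gTrans {g : G} {I : Ideal R} {r : R} : r ∈ gTrans g I ↔ g • r ∈ I := Iff.rfl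

lemma gTrans_ext {g : G} {I J : Ideal R} (h : ∀ r : R, g • r ∈ I ↔ g • r ∈ J) :
    gTrans g I = gTrans g J := by
  ext r; exact h r

lemma gTrans_one (I : Ideal R) : gTrans (1 : G) I = I := by
  ext r; simp [mem_gTrans]

lemma gTrans_gTrans (g h : G) (I : Ideal R) : gTrans h (gTrans g I) = gTrans (g * h) I := by
  ext r; simp [mem_gTrans, mul_smul]

lemma gTrans_mono {g : G} {I J : Ideal R} (h : I ≤ J) : gTrans g I ≤ gTrans g J :=
  fun _ hr => h hr

lemma gTrans_ts {g : G} {I : Ideal R} (hI : IsTwoSidedI I) : IsTwoSidedI (gTrans g I) := by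
  intro a ha r
  have : g • (a * r) = (g • a) * (g • r) := smul_mul' g a r
  rw [mem_gTrans, this]
  exact hI _ ha _

lemma gTrans_ne_top {g : G} {I : Ideal R} (hI : I ≠ ⊤) : gTrans g I ≠ ⊤ := by
  intro h
  apply hI
  rw [Ideal.eq_top_iff_one] at h ⊢
  simpa using (mem_gTrans.mp h)

lemma mem_res {I : Ideal R} {r : R} : r ∈ resGIdeal G I ↔ ∀ g : G, g • r ∈ I := by
  simp [resGIdeal, Ideal.mem_iInf, mem_gTrans]

lemma res_le (I : Ideal R) : resGIdeal G I ≤ I := by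
  intro r hr
  simpa using (mem_res.mp hr) (1 : G)

lemma res_gTrans (g : G) (I : Ideal R) : resGIdeal G (gTrans g I) = resGIdeal G I := by
  ext r
  simp only [mem_res, mem_gTrans]
  constructor
  · intro h h'
    have := h (g⁻¹ * h')
    rwa [mul_smul, smul_inv_smul] at this
  · intro h h'
    rw [← mul_smul]
    exact h (g * h')

lemma gTrans_res (g : G) (I : Ideal R) : gTrans g (resGIdeal G I) = resGIdeal G I := by
  ext r
  simp only [mem_gTrans, mem_res]
  constructor
  · intro h h'
    have := h (h' * g⁻¹)
    rwa [mul_smul, inv_smul_smul] at this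
  · intro h h'
    rw [← mul_smul]
    exact h (h' * g)

lemma res_ts {I : Ideal R} (hI : IsTwoSidedI I) : IsTwoSidedI (resGIdeal G I) := by
  intro a ha r
  rw [mem_res]
  intro g
  rw [smul_mul']
  exact hI _ (mem_res.mp ha g) _

lemma res_GIdeal {I : Ideal R} (hI : IsTwoSidedI I) : IsGIdeal G (resGIdeal G I) :=
  ⟨res_ts hI, fun g => gTrans_res g I⟩

lemma GIdeal_res {Q : Ideal R} (hQ : IsGIdeal G Q) : resGIdeal G Q = Q := by
  refine le_antisymm (res_le Q) ?_
  intro r hr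
  rw [mem_res]
  intro g
  have : r ∈ gTrans g Q := by rw [hQ.2 g]; exact hr
  exact mem_gTrans.mp this

lemma gTrans_smul_mem {g : G} {I : Ideal R} {r : R} (h : r ∈ I) : g • r ∈ gTrans g⁻¹ I := by
  rw [mem_gTrans, inv_smul_smul]; exact h

lemma le_gTrans_iff {g : G} {I P : Ideal R} : I ≤ gTrans g P ↔ ∀ a ∈ I, g • a ∈ P :=
  Iff.rfl

lemma gTrans_prime {g : G} {P : Ideal R} (hP : IsPrimeTS P) : IsPrimeTS (gTrans g P) := by
  obtain ⟨hts, hne, hprime⟩ := hP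
  refine ⟨gTrans_ts hts, gTrans_ne_top hne, ?_⟩
  intro I J hI hJ hprod
  have key : ∀ a ∈ gTrans g⁻¹ I, ∀ b ∈ gTrans g⁻¹ J, a * b ∈ P := by
    intro a ha b hb
    have h1 : g • ((g⁻¹ • a) * (g⁻¹ • b)) ∈ P :=
      mem_gTrans.mp (hprod (g⁻¹ • a) (mem_gTrans.mp ha) (g⁻¹ • b) (mem_gTrans.mp hb))
    rwa [smul_mul', smul_inv_smul, smul_inv_smul] at h1
  rcases hprime _ _ (gTrans_ts hI) (gTrans_ts hJ) key with h | h
  · left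
    intro a ha
    refine mem_gTrans.mpr (h (mem_gTrans.mpr ?_))
    rwa [inv_smul_smul]
  · right
    intro b hb
    refine mem_gTrans.mpr (h (mem_gTrans.mpr ?_))
    rwa [inv_smul_smul]

lemma gTrans_max {g : G} {M : Ideal R} (hM : IsMaxTS M) : IsMaxTS (gTrans g M) := by
  obtain ⟨hts, hne, hmax⟩ := hM
  refine ⟨gTrans_ts hts, gTrans_ne_top hne, ?_⟩
  intro J hJ hlt
  have h1 : M ≤ gTrans g⁻¹ J := by
    have := gTrans_mono (g := g⁻¹) hlt.le
    rwa [gTrans_gTrans, mul_inv_cancel, gTrans_one] at this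
  have h2 : M ≠ gTrans g⁻¹ J := by
    intro h
    apply hlt.ne
    rw [h, gTrans_gTrans, inv_mul_cancel, gTrans_one]
  have := hmax _ (gTrans_ts hJ) (lt_of_le_of_ne h1 h2)
  have h3 := congrArg (gTrans (g : G)) this
  rwa [gTrans_gTrans, inv_mul_cancel, gTrans_one] at h3

lemma GIdeal_smul_mem {Q : Ideal R} (hQ : IsGIdeal G Q) {r : R} (hr : r ∈ Q) (g : G) :
    g • r ∈ Q := by
  have : r ∈ gTrans g Q := by rw [hQ.2 g]; exact hr
  exact mem_gTrans.mp this

/-- The `G`-ideal generated by `I`: the supremum of all translates. -/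
noncomputable def gSup (G : Type*) [Group G] [MulSemiringAction G R] (I : Ideal R) : Ideal R :=
  ⨆ g : G, gTrans g I

lemma le_gSup (I : Ideal R) : I ≤ gSup G I := by
  have := le_iSup (fun g : G => gTrans g I) (1 : G)
  rwa [gTrans_one] at this

lemma gSup_ts {I : Ideal R} (hI : IsTwoSidedI I) : IsTwoSidedI (gSup G I) := by
  intro a ha r
  refine Submodule.iSup_induction (motive := fun a => a * r ∈ gSup G I) _ ha ?_ ?_ ?_
  · intro g x hx
    exact le_iSup (fun g : G => gTrans g I) g (gTrans_ts hI _ hx r)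
  · simp
  · intro x y hx hy
    rw [add_mul]
    exact Ideal.add_mem _ hx hy

lemma le_res_iff {I P : Ideal R} : I ≤ resGIdeal G P ↔ gSup G I ≤ P := by
  constructor
  · intro h
    refine iSup_le fun g => ?_
    intro r hr
    have := mem_res.mp (h (mem_gTrans.mp hr)) g⁻¹
    rwa [smul_smul, inv_mul_cancel, one_smul] at this
  · intro h a ha
    rw [mem_res]
    intro g
    refine h ?_
    refine le_iSup (fun g : G => gTrans g I) g⁻¹ ?_
    rw [mem_gTrans, inv_smul_smul]
    exact ha

lemma gSup_eq_of_stable {I : Ideal R} (hI : ∀ g : G, gTrans g I = I) : gSup G I = I :=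
  le_antisymm (iSup_le fun g => (hI g).le) (le_gSup I)

lemma gSup_le_of_stable {I Q : Ideal R} (hQ : ∀ g : G, gTrans g Q = Q) (h : I ≤ Q) :
    gSup G I ≤ Q := by
  refine iSup_le fun g => ?_
  rw [← hQ g]
  exact gTrans_mono h

lemma res_top : resGIdeal G (⊤ : Ideal R) = ⊤ := by
  rw [eq_top_iff]
  intro r _
  rw [mem_res]
  exact fun g => trivial

/-- Part (1): the `G`-core of a prime is `G`-prime. -/
lemma res_of_prime {P : Ideal R} (hP : IsPrimeTS P) : IsGPrime G (resGIdeal G P) := by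
  obtain ⟨hts, hne, hprime⟩ := hP
  refine ⟨res_GIdeal hts, ?_, ?_⟩
  · intro h
    apply hne
    rw [eq_top_iff, ← h]
    exact res_le P
  · intro I J hI hJ hprod
    rcases hprime I J hI.1 hJ.1 (fun a ha b hb => res_le P (hprod a ha b hb)) with h | h
    · left
      exact le_res_iff.mpr ((gSup_eq_of_stable hI.2).le.trans h)
    · right
      exact le_res_iff.mpr ((gSup_eq_of_stable hJ.2).le.trans h)

/-- Part (2): every `G`-prime is the `G`-core of a prime. -/
lemma exists_prime_res [IsNoetherianRing R] {Q : Ideal R} (hQ : IsGPrime G Q) :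
    ∃ P : Ideal R, IsPrimeTS P ∧ resGIdeal G P = Q := by
  obtain ⟨hQgi, hQne, hQprime⟩ := hQ
  set S : Set (Ideal R) := {K | IsTwoSidedI K ∧ Q ≤ K ∧ resGIdeal G K ≤ Q} with hS
  have hQS : Q ∈ S := ⟨hQgi.1, le_refl Q, (GIdeal_res hQgi).le⟩
  obtain ⟨P, hPS, hPmax⟩ :=
    (set_has_maximal_iff_noetherian.mpr (inferInstance : IsNoetherianRing R)) S ⟨Q, hQS⟩
  obtain ⟨hPts, hQP, hresP⟩ := hPS
  have hresP' : resGIdeal G P = Q := by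
    refine le_antisymm hresP ?_
    intro r hr
    rw [mem_res]
    exact fun g => hQP (GIdeal_smul_mem hQgi hr g)
  have hPne : P ≠ ⊤ := by
    intro h
    apply hQne
    rw [eq_top_iff, ← hresP', h, res_top]
  refine ⟨P, ⟨hPts, hPne, ?_⟩, hresP'⟩
  intro I J hI hJ hprod
  by_contra hcon
  push_neg at hcon
  obtain ⟨hInle, hJnle⟩ := hcon
  -- P + I and P + J are strictly bigger two-sided ideals containing Q
  have sup_ts : ∀ K : Ideal R, IsTwoSidedI K → IsTwoSidedI (P ⊔ K) := by
    intro K hK a ha r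
    obtain ⟨p, hp, k, hk, rfl⟩ := Submodule.mem_sup.mp ha
    rw [add_mul]
    exact Submodule.add_mem _ (Submodule.mem_sup_left (hPts _ hp _))
      (Submodule.mem_sup_right (hK _ hk _))
  have hstep : ∀ K : Ideal R, IsTwoSidedI K → ¬ K ≤ P → ¬ resGIdeal G (P ⊔ K) ≤ Q := by
    intro K hK hKnle hres
    have hmem : P ⊔ K ∈ S := ⟨sup_ts K hK, le_trans hQP le_sup_left, hres⟩
    have : ¬ P < P ⊔ K := hPmax _ hmem
    apply this
    refine lt_of_le_of_ne le_sup_left ?_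
    intro h
    apply hKnle
    rw [h]
    exact le_sup_right
  have hAB : ∀ a ∈ resGIdeal G (P ⊔ I), ∀ b ∈ resGIdeal G (P ⊔ J), a * b ∈ Q := by
    intro a ha b hb
    rw [← hresP', mem_res]
    intro g
    rw [smul_mul']
    obtain ⟨p, hp, i, hi, hpi⟩ := Submodule.mem_sup.mp (mem_res.mp ha g)
    obtain ⟨q, hq, j, hj, hqj⟩ := Submodule.mem_sup.mp (mem_res.mp hb g)
    rw [← hpi, ← hqj, add_mul, mul_add, mul_add]
    refine Submodule.add_mem _ (Submodule.add_mem _ (hPts _ hp _) (hPts _ hp _)) ?_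
    refine Submodule.add_mem _ (Ideal.mul_mem_left _ _ hq) ?_
    exact hprod i hi j hj
  rcases hQprime _ _ (res_GIdeal (sup_ts I hI)) (res_GIdeal (sup_ts J hJ)) hAB with h | h
  · exact hstep I hI hInle h
  · exact hstep J hJ hJnle h

end Aux

/-- 1.11: `P ↦ (P : G)` is a topological quotient map from `spec R` onto
`G-spec R`, and `M ↦ (M : G)` is a topological quotient map from `max R` onto its image
`{(M : G) : M ∈ max R} ⊆ G-spec R` (with the relative topology).  Closedness is expressed
via Zariski closed sets. -/
theorem stmt_5 {R : Type*} [Ring R] [IsNoetherianRing R] [IsNoetherianRing Rᵐᵒᵖ]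
    (G : Type*) [Group G] [MulSemiringAction G R] :
    -- the map is well defined into G-spec R and surjective onto it
    (∀ P : Ideal R, IsPrimeTS P → IsGPrime G (resGIdeal G P)) ∧
    (∀ Q : Ideal R, IsGPrime G Q → ∃ P : Ideal R, IsPrimeTS P ∧ resGIdeal G P = Q) ∧
    -- quotient topology condition on spec R → G-spec R
    (∀ V ⊆ {Q : Ideal R | IsGPrime G Q},
        (∃ I : Ideal R, IsTwoSidedI I ∧ V = {Q | IsGPrime G Q ∧ I ≤ Q}) ↔
        (∃ I : Ideal R, IsTwoSidedI I ∧
          {P | IsPrimeTS P ∧ resGIdeal G P ∈ V} = {P | IsPrimeTS P ∧ I ≤ P})) ∧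
    -- quotient topology condition on max R → {(M : G) : M ∈ max R}
    (∀ V ⊆ {Q : Ideal R | ∃ M : Ideal R, IsMaxTS M ∧ resGIdeal G M = Q},
        (∃ I : Ideal R, IsTwoSidedI I ∧
          V = {Q | (∃ M : Ideal R, IsMaxTS M ∧ resGIdeal G M = Q) ∧ I ≤ Q}) ↔
        (∃ I : Ideal R, IsTwoSidedI I ∧
          {M | IsMaxTS M ∧ resGIdeal G M ∈ V} = {M | IsMaxTS M ∧ I ≤ M})) := by
  refine ⟨fun P hP => res_of_prime hP, fun Q hQ => exists_prime_res hQ, ?_, ?_⟩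
  · -- spec quotient condition
    intro V hV
    constructor
    · rintro ⟨I, hIts, rfl⟩
      refine ⟨gSup G I, gSup_ts hIts, ?_⟩
      ext P
      simp only [Set.mem_setOf_eq]
      constructor
      · rintro ⟨hP, _, hle⟩
        exact ⟨hP, (le_res_iff.mp hle : _)⟩
      · intro ⟨hP, hle⟩
        exact ⟨hP, res_of_prime hP, le_res_iff.mpr hle⟩
    · rintro ⟨I, hIts, hpre⟩
      refine ⟨gSup G I, gSup_ts hIts, ?_⟩
      ext Q
      simp only [Set.mem_setOf_eq]
      constructor
      · intro hQV
        have hQ : IsGPrime G Q := hV hQV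
        refine ⟨hQ, ?_⟩
        obtain ⟨P, hP, hres⟩ := exists_prime_res hQ
        have hIQ : I ≤ Q := by
          rw [← hres]
          intro a ha
          rw [mem_res]
          intro g
          have hmem := (Set.ext_iff.mp hpre (gTrans g P)).mp
            ⟨gTrans_prime hP, by rw [res_gTrans, hres]; exact hQV⟩
          exact hmem.2 ha
        exact gSup_le_of_stable hQ.1.2 hIQ
      · rintro ⟨hQ, hle⟩
        obtain ⟨P, hP, hres⟩ := exists_prime_res hQ
        have hPpre : P ∈ {P | IsPrimeTS P ∧ I ≤ P} :=
          ⟨hP, le_trans (le_gSup I) (le_trans hle (hres ▸ res_le P))⟩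
        rw [← hpre] at hPpre
        rw [← hres]
        exact hPpre.2
  · -- max quotient condition
    intro V hV
    constructor
    · rintro ⟨I, hIts, rfl⟩
      refine ⟨gSup G I, gSup_ts hIts, ?_⟩
      ext M
      simp only [Set.mem_setOf_eq]
      constructor
      · rintro ⟨hM, _, hle⟩
        exact ⟨hM, le_res_iff.mp hle⟩
      · intro ⟨hM, hle⟩
        exact ⟨hM, ⟨M, hM, rfl⟩, le_res_iff.mpr hle⟩
    · rintro ⟨I, hIts, hpre⟩
      refine ⟨gSup G I, gSup_ts hIts, ?_⟩
      ext Q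
      simp only [Set.mem_setOf_eq]
      constructor
      · intro hQV
        obtain ⟨M, hM, hres⟩ := hV hQV
        refine ⟨⟨M, hM, hres⟩, ?_⟩
        have hIQ : I ≤ Q := by
          rw [← hres]
          intro a ha
          rw [mem_res]
          intro g
          have hmem := (Set.ext_iff.mp hpre (gTrans g M)).mp
            ⟨gTrans_max hM, by rw [res_gTrans, hres]; exact hQV⟩
          exact hmem.2 ha
        exact gSup_le_of_stable (fun g => by rw [← hres, gTrans_res]) hIQ
      · rintro ⟨⟨M, hM, hres⟩, hle⟩
        have hMpre : M ∈ {M | IsMaxTS M ∧ I ≤ M} :=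
          ⟨hM, le_trans (le_gSup I) (le_trans hle (hres ▸ res_le M))⟩
        rw [← hpre] at hMpre
        rw [← hres]
        exact hMpre.2
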